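/- For each integer d ≥ 2, each k ∈ {0,…,d−2}, and each rational p/q in lowest terms with 0 < p < q, there is exactly one orbit of the map σ_d : t ↦ dt (mod 1) that is entirely contained in the open arc A_k = (k/(d−1), (k+1)/(d−1)) and has angular rotation number p/q. -/

import Mathlib

/-- The open arc of the circle `ℝ/ℤ` which is the projection of the real interval `(a,b)`. -/
def Arc (a b : ℝ) : Set (AddCircle (1 : ℝ)) :=
  (fun x : ℝ => ((x : ℝ) : AddCircle (1 : ℝ))) '' Set.Ioo a b

/-- A labelling `L` of points of `ℝ/ℤ` listed in counterclockwise cyclic order. -/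
def IsCyclicList {q : ℕ} [NeZero q] (L : Fin q → AddCircle (1 : ℝ)) : Prop :=
  ∃ x : Fin q → ℝ, StrictMono x ∧ (∀ i, x i < x 0 + 1) ∧
    ∀ i, ((x i : ℝ) : AddCircle (1 : ℝ)) = L i

/-- A `q`-point set `s ⊆ ℝ/ℤ` has angular rotation number `p/q` under `t ↦ d·t`:
listed in cyclic order, the map shifts the points by `p` positions. -/
def SetRotNum (d p q : ℕ) [NeZero q] (s : Set (AddCircle (1 : ℝ))) : Prop :=
  ∃ L : Fin q → AddCircle (1 : ℝ), IsCyclicList L ∧ Set.range L = s ∧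
    ∀ i, (d : ℕ) • L i = L (i + (Fin.ofNat q p))

section Aux8
open Finset
open Fin.NatCast

def eps8 (p q j : ℕ) : ℕ := if q - p ≤ j % q then 1 else 0

/-- the integer whose base-`d` digits are the `eps8` digits along the arithmetic
progression starting at `j` with step `p`. -/

def Nval8 (d p q j : ℕ) : ℕ := ∑ n ∈ range q, eps8 p q (j + n * p) * d ^ (q - 1 - n)

lemma eps8_le_one (p q j : ℕ) : eps8 p q j ≤ 1 := by
  unfold eps8; split <;> omega

lemma eps8_congr (p q : ℕ) {j j' : ℕ} (h : j % q = j' % q) : eps8 p q j = eps8 p q j' := by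
  unfold eps8; rw [h]

lemma Nval8_congr (d p q : ℕ) {j j' : ℕ} (h : j % q = j' % q) :
    Nval8 d p q j = Nval8 d p q j' := by
  unfold Nval8
  refine Finset.sum_congr rfl fun n _ => ?_
  have : (j + n * p) % q = (j' + n * p) % q := by
    rw [Nat.add_mod, h, ← Nat.add_mod]
  rw [eps8_congr p q this]

lemma eps8_div (p q : ℕ) (hpq : p < q) (A : ℕ) :
    (A + p) / q = A / q + eps8 p q A := by
  have hq : 0 < q := by omega
  rw [Nat.add_div hq]
  have h1 : p / q = 0 := Nat.div_eq_of_lt hpq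
  have h2 : p % q = p := Nat.mod_eq_of_lt hpq
  unfold eps8
  rw [h1, h2]
  by_cases h : q - p ≤ A % q
  · rw [if_pos h, if_pos (by omega)]
  · rw [if_neg h, if_neg (by omega)]

lemma sum_eps8 (p q : ℕ) (hpq : p < q) (i N : ℕ) :
    i / q + ∑ n ∈ range N, eps8 p q (i + n * p) = (i + N * p) / q := by
  induction N with
  | zero => simp
  | succ N ih =>
      rw [Finset.sum_range_succ, ← add_assoc, ih]
      have : i + (N + 1) * p = (i + N * p) + p := by ring
      rw [this, eps8_div p q hpq]

lemma exists_hit {p q : ℕ} (hq : 0 < q) (hgcd : Nat.gcd p q = 1) (i t : ℕ) :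
    ∃ n, n < q ∧ (i + n * p) % q = t % q := by
  haveI : NeZero q := ⟨hq.ne'⟩
  have hu : IsUnit (p : ZMod q) := (ZMod.isUnit_iff_coprime p q).mpr hgcd
  obtain ⟨u, hu'⟩ := hu
  set n : ZMod q := ((t : ZMod q) - (i : ZMod q)) * ↑u⁻¹ with hn
  refine ⟨n.val, ZMod.val_lt n, ?_⟩
  have key : ((i + n.val * p : ℕ) : ZMod q) = (t : ZMod q) := by
    push_cast
    rw [ZMod.natCast_val, ZMod.cast_id]
    calc (i : ZMod q) + n * p
        = (i : ZMod q) + ((t : ZMod q) - (i : ZMod q)) * (↑u⁻¹ * ↑u) := by rw [hn, hu']; ring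
      _ = (t : ZMod q) := by rw [u.inv_mul]; ring
  exact (ZMod.natCast_eq_natCast_iff _ _ _).mp key

lemma geo_lt (d : ℕ) (hd : 2 ≤ d) (M : ℕ) : ∑ m ∈ range M, d ^ m < d ^ M := by
  induction M with
  | zero => simp
  | succ n ih =>
      rw [Finset.sum_range_succ, pow_succ]
      have h1 : 1 ≤ d ^ n := Nat.one_le_pow _ _ (by omega)
      nlinarith

lemma Nval8_strictMono (d p q : ℕ) (hd : 2 ≤ d) (hp0 : 0 < p) (hpq : p < q)
    (hgcd : Nat.gcd p q = 1) {i j : ℕ} (hij : i < j) (hjq : j < q) :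
    Nval8 d p q i < Nval8 d p q j := by
  have hq : 0 < q := by omega
  have hsumi : ∀ N, ∑ n ∈ range N, eps8 p q (i + n * p) = (i + N * p) / q := by
    intro N; have h := sum_eps8 p q hpq i N
    have : i / q = 0 := Nat.div_eq_of_lt (by omega)
    omega
  have hsumj : ∀ N, ∑ n ∈ range N, eps8 p q (j + n * p) = (j + N * p) / q := by
    intro N; have h := sum_eps8 p q hpq j N
    have : j / q = 0 := Nat.div_eq_of_lt hjq
    omega
  have hle : ∀ N, ∑ n ∈ range N, eps8 p q (i + n * p) ≤ ∑ n ∈ range N, eps8 p q (j + n * p) := by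
    intro N; rw [hsumi, hsumj]
    exact Nat.div_le_div_right (by omega)
  obtain ⟨N₀, hN₀q, hN₀⟩ := exists_hit hq hgcd i (q - 1)
  rw [Nat.mod_eq_of_lt (by omega : q - 1 < q)] at hN₀
  -- strict inequality of partial sums at N₀
  have hstrict : ∑ n ∈ range N₀, eps8 p q (i + n * p) < ∑ n ∈ range N₀, eps8 p q (j + n * p) := by
    rw [hsumi, hsumj]
    have hmod := Nat.div_add_mod (i + N₀ * p) q
    have hql : q * ((i + N₀ * p) / q + 1) = q * ((i + N₀ * p) / q) + q := by ring
    have h1 : j + N₀ * p = (j - i - 1) + q * ((i + N₀ * p) / q + 1) := by omega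
    rw [h1, Nat.add_mul_div_left _ _ hq, Nat.div_eq_of_lt (by omega : j - i - 1 < q)]
    omega
  -- first differing digit
  have hex : ∃ n, eps8 p q (i + n * p) ≠ eps8 p q (j + n * p) := by
    by_contra hcon
    push_neg at hcon
    have : ∑ n ∈ range N₀, eps8 p q (i + n * p) = ∑ n ∈ range N₀, eps8 p q (j + n * p) :=
      Finset.sum_congr rfl fun n _ => hcon n
    omega
  classical
  set n₀ := Nat.find hex with hn₀def
  have hn₀ : eps8 p q (i + n₀ * p) ≠ eps8 p q (j + n₀ * p) := Nat.find_spec hex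
  have hmin : ∀ m < n₀, eps8 p q (i + m * p) = eps8 p q (j + m * p) := by
    intro m hm
    by_contra hcon
    have : Nat.find hex ≤ m := Nat.find_le hcon
    omega
  have hn₀q : n₀ < q := by
    have : ∃ n < N₀, eps8 p q (i + n * p) ≠ eps8 p q (j + n * p) := by
      by_contra hcon
      push_neg at hcon
      have : ∑ n ∈ range N₀, eps8 p q (i + n * p) = ∑ n ∈ range N₀, eps8 p q (j + n * p) :=
        Finset.sum_congr rfl fun n hn => hcon n (Finset.mem_range.mp hn)
      omega
    obtain ⟨n, hn, hne⟩ := this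
    have : Nat.find hex ≤ n := Nat.find_le hne
    omega
  have hpre : ∑ n ∈ range n₀, eps8 p q (i + n * p) = ∑ n ∈ range n₀, eps8 p q (j + n * p) :=
    Finset.sum_congr rfl fun n hn => hmin n (Finset.mem_range.mp hn)
  have hd01 : eps8 p q (i + n₀ * p) = 0 ∧ eps8 p q (j + n₀ * p) = 1 := by
    have h := hle (n₀ + 1)
    rw [Finset.sum_range_succ, Finset.sum_range_succ, hpre] at h
    have e1 := eps8_le_one p q (i + n₀ * p)
    have e2 := eps8_le_one p q (j + n₀ * p)
    omega
  -- conclude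
  unfold Nval8
  have hsplit : ∀ f : ℕ → ℕ, ∑ n ∈ range q, f n =
      ∑ n ∈ range n₀, f n + f n₀ + ∑ n ∈ Ico (n₀+1) q, f n := by
    intro f
    rw [range_eq_Ico, ← Finset.sum_Ico_consecutive f (by omega : 0 ≤ n₀ + 1) (by omega : n₀ + 1 ≤ q),
      ← range_eq_Ico, Finset.sum_range_succ]
  rw [hsplit, hsplit]
  have htail : ∑ n ∈ Ico (n₀+1) q, eps8 p q (i + n * p) * d ^ (q - 1 - n) < d ^ (q - 1 - n₀) := by
    calc ∑ n ∈ Ico (n₀+1) q, eps8 p q (i + n * p) * d ^ (q - 1 - n)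
        ≤ ∑ n ∈ Ico (n₀+1) q, d ^ (q - 1 - n) := by
          refine Finset.sum_le_sum fun n _ => ?_
          have := eps8_le_one p q (i + n * p)
          calc eps8 p q (i + n * p) * d ^ (q-1-n) ≤ 1 * d ^ (q-1-n) :=
                Nat.mul_le_mul_right _ this
            _ = d ^ (q-1-n) := one_mul _
      _ = ∑ m ∈ range (q - 1 - n₀), d ^ m := by
          refine Finset.sum_nbij' (fun n => q - 1 - n) (fun m => q - 1 - m) ?_ ?_ ?_ ?_ ?_
          · intro a ha; simp only [Finset.mem_Ico] at ha; simp only [Finset.mem_range]; omega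
          · intro a ha; simp only [Finset.mem_range] at ha; simp only [Finset.mem_Ico]; omega
          · intro a ha; simp only [Finset.mem_Ico] at ha; show q - 1 - (q - 1 - a) = a; omega
          · intro a ha; simp only [Finset.mem_range] at ha; show q - 1 - (q - 1 - a) = a; omega
          · intro a ha; rfl
      _ < d ^ (q - 1 - n₀) := geo_lt d hd _
  have hpre' : ∑ n ∈ range n₀, eps8 p q (i + n * p) * d ^ (q-1-n) =
      ∑ n ∈ range n₀, eps8 p q (j + n * p) * d ^ (q-1-n) :=
    Finset.sum_congr rfl fun n hn => by rw [hmin n (Finset.mem_range.mp hn)]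
  have htail' : 0 ≤ ∑ n ∈ Ico (n₀+1) q, eps8 p q (j + n * p) * d ^ (q - 1 - n) := Nat.zero_le _
  rw [hd01.1, hd01.2, hpre']
  simp only [zero_mul, one_mul, add_zero]
  omega

lemma Nval8_rec (d p q j : ℕ) (hq : 0 < q) :
    d * Nval8 d p q j + eps8 p q j = eps8 p q j * d ^ q + Nval8 d p q (j + p) := by
  obtain ⟨Q, rfl⟩ : ∃ Q, q = Q + 1 := ⟨q - 1, by omega⟩
  have hL : d * Nval8 d p (Q+1) j =
      ∑ n ∈ range Q, eps8 p (Q+1) (j + (n+1) * p) * d ^ (Q + 1 - (n+1))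
        + eps8 p (Q+1) j * d ^ (Q+1) := by
    unfold Nval8
    rw [Finset.mul_sum, Finset.sum_range_succ']
    congr 1
    · refine Finset.sum_congr rfl fun n hn => ?_
      have hn' : n < Q := Finset.mem_range.mp hn
      have hexp : Q + 1 - 1 - (n+1) + 1 = Q + 1 - (n+1) := by omega
      rw [← hexp, pow_succ]
      ring
    · have h0 : j + 0 * p = j := by ring
      have h2 : Q + 1 - 1 - 0 = Q := by omega
      rw [h0, h2, pow_succ]
      ring
  have hR : Nval8 d p (Q+1) (j + p) =
      ∑ n ∈ range Q, eps8 p (Q+1) (j + (n+1) * p) * d ^ (Q + 1 - (n+1))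
        + eps8 p (Q+1) j := by
    unfold Nval8
    rw [Finset.sum_range_succ]
    congr 1
    · refine Finset.sum_congr rfl fun n hn => ?_
      have h1 : j + p + n * p = j + (n+1) * p := by ring
      have h2 : Q + 1 - 1 - n = Q + 1 - (n+1) := by omega
      rw [h1, h2]
    · have h1 : j + p + Q * p = j + (Q + 1) * p := by ring
      have h2 : eps8 p (Q+1) (j + (Q+1) * p) = eps8 p (Q+1) j := by
        refine eps8_congr _ _ ?_
        conv_rhs => rw [← Nat.add_mul_mod_self_left j (Q+1) p]
      simp [h1, h2]
  rw [hL, hR]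
  ring

lemma Nval8_pos (d p q j : ℕ) (hd : 2 ≤ d) (hp0 : 0 < p) (hpq : p < q)
    (hgcd : Nat.gcd p q = 1) : 0 < Nval8 d p q j := by
  have hq : 0 < q := by omega
  obtain ⟨n, hn, hmod⟩ := exists_hit hq hgcd j (q - 1)
  rw [Nat.mod_eq_of_lt (by omega : q - 1 < q)] at hmod
  refine Finset.sum_pos' (fun m _ => Nat.zero_le _) ⟨n, Finset.mem_range.mpr hn, ?_⟩
  have : eps8 p q (j + n * p) = 1 := by
    unfold eps8
    rw [hmod, if_pos (by omega)]
  rw [this, one_mul]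
  exact Nat.pow_pos (by omega)

/-- upper bound: some digit is 0, so adding that power still stays below the all-ones sum. -/

lemma Nval8_upper (d p q j : ℕ) (hd : 2 ≤ d) (hp0 : 0 < p) (hpq : p < q)
    (hgcd : Nat.gcd p q = 1) :
    ∃ n₀ < q, Nval8 d p q j + d ^ (q - 1 - n₀) ≤ ∑ n ∈ range q, d ^ (q - 1 - n) := by
  have hq : 0 < q := by omega
  obtain ⟨n₀, hn₀, hmod⟩ := exists_hit hq hgcd j 0
  rw [Nat.zero_mod] at hmod
  have hz : eps8 p q (j + n₀ * p) = 0 := by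
    unfold eps8
    rw [hmod, if_neg (by omega)]
  refine ⟨n₀, hn₀, ?_⟩
  have hmem : n₀ ∈ range q := Finset.mem_range.mpr hn₀
  have h1 : Nval8 d p q j = ∑ n ∈ (range q).erase n₀, eps8 p q (j + n * p) * d ^ (q - 1 - n) := by
    unfold Nval8
    rw [Finset.sum_erase _ (by rw [hz, zero_mul])]
  have h2 : ∑ n ∈ (range q).erase n₀, eps8 p q (j + n * p) * d ^ (q - 1 - n)
      ≤ ∑ n ∈ (range q).erase n₀, d ^ (q - 1 - n) := by
    refine Finset.sum_le_sum fun n _ => ?_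
    have := eps8_le_one p q (j + n * p)
    calc eps8 p q (j + n * p) * d ^ (q-1-n) ≤ 1 * d ^ (q-1-n) := Nat.mul_le_mul_right _ this
      _ = d ^ (q-1-n) := one_mul _
  have h3 : ∑ n ∈ (range q).erase n₀, d ^ (q - 1 - n) + d ^ (q - 1 - n₀)
      = ∑ n ∈ range q, d ^ (q - 1 - n) := Finset.sum_erase_add _ _ hmem
  omega

lemma core8 (d p q : ℕ) [NeZero q] (hd : 2 ≤ d) (hp0 : 0 < p) (hpq : p < q)
    (w : Fin q → ℝ) (hw : StrictMono w)
    (hmem : ∀ j, w j ∈ Set.Ioo (0:ℝ) (1/((d:ℝ)-1)))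
    (e : Fin q → ℕ) (he : ∀ j, e j ≤ 1)
    (hrel : ∀ j, (d:ℝ) * w j = w (j + (p : Fin q)) + e j) :
    ∀ j, w j = (Nval8 d p q j.val : ℝ) / ((d:ℝ)^q - 1) := by
  have hq2 : 2 ≤ q := by omega
  have hd2 : (2:ℝ) ≤ (d:ℝ) := by exact_mod_cast hd
  have hd1 : (1:ℝ) < (d:ℝ) := by linarith
  have hpval : ((p : ℕ) : Fin q).val = p := by
    rw [Fin.val_natCast, Nat.mod_eq_of_lt hpq]
  -- monotone structure of the digits
  have hmono : ∀ j j' : Fin q, j < j' → e j = 1 → e j' = 1 := by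
    intro j j' hjj' hej
    by_contra hej'
    have hej'0 : e j' = 0 := by have := he j'; omega
    have h1 := hrel j
    have h2 := hrel j'
    rw [hej, hej'0] at *
    have hm1 := hmem (j + (p : Fin q))
    have hm2 := hmem (j' + (p : Fin q))
    obtain ⟨hm1a, hm1b⟩ := hm1
    obtain ⟨hm2a, hm2b⟩ := hm2
    have hlt : w j < w j' := hw hjj'
    -- D w j = w(j+p) + 1 > 1 ;  D w j' = w(j'+p) < 1/(D-1)
    have hD0 : (0:ℝ) < (d:ℝ) := by linarith
    have hgt : 1 < (d:ℝ) * w j := by push_cast at h1; nlinarith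
    have hlt2 : (d:ℝ) * w j' < 1/((d:ℝ)-1) := by push_cast at h2; nlinarith
    have : (d:ℝ) * w j < (d:ℝ) * w j' := by nlinarith
    have hd1' : (0:ℝ) < (d:ℝ) - 1 := by linarith
    have : ((d:ℝ)-1) * ((d:ℝ) * w j') < 1 := by
      rw [lt_div_iff₀ hd1'] at hlt2; nlinarith
    nlinarith
  -- the two special indices
  have hqp1lt : q - p - 1 < q := by omega
  have hqplt : q - p < q := by omega
  set qp1 : Fin q := ⟨q - p - 1, hqp1lt⟩ with hqp1def
  set qp : Fin q := ⟨q - p, hqplt⟩ with hqpdef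
  have hq1lt : q - 1 < q := by omega
  have hadd1 : qp1 + (p : Fin q) = ⟨q - 1, hq1lt⟩ := by
    apply Fin.ext
    rw [Fin.add_def]
    simp only [hpval]
    show (q - p - 1 + p) % q = q - 1
    rw [show q - p - 1 + p = q - 1 from by omega, Nat.mod_eq_of_lt (by omega)]
  have hadd2 : qp + (p : Fin q) = (0 : Fin q) := by
    apply Fin.ext
    rw [Fin.add_def]
    simp only [hpval]
    show (q - p + p) % q = (0 : Fin q).val
    rw [show q - p + p = q from by omega, Nat.mod_self]
    rfl
  have hwlt : w (0 : Fin q) < w ⟨q - 1, hq1lt⟩ := by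
    apply hw
    show (0 : Fin q).val < q - 1
    rw [Fin.val_zero]
    omega
  have hqq : qp1 < qp := by show q - p - 1 < q - p; omega
  have hwqq : w qp1 < w qp := hw hqq
  have he1 : e qp1 = 0 ∧ e qp = 1 := by
    have hD0 : (0:ℝ) < (d:ℝ) := by linarith
    have hb1 := hrel qp1
    have hb2 := hrel qp
    rw [hadd1] at hb1
    rw [hadd2] at hb2
    have hnot00 : ¬ (e qp1 = 0 ∧ e qp = 0) := by
      rintro ⟨ha, hb⟩
      rw [ha] at hb1; rw [hb] at hb2
      push_cast at hb1 hb2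
      nlinarith
    have hnot11 : ¬ (e qp1 = 1 ∧ e qp = 1) := by
      rintro ⟨ha, hb⟩
      rw [ha] at hb1; rw [hb] at hb2
      push_cast at hb1 hb2
      nlinarith
    have ha := he qp1
    have hb := he qp
    rcases Nat.lt_or_ge (e qp1) 1 with h | h
    · have ha0 : e qp1 = 0 := by omega
      refine ⟨ha0, ?_⟩
      have := fun hb0 => hnot00 ⟨ha0, hb0⟩
      omega
    · have ha1 : e qp1 = 1 := by omega
      have := hmono qp1 qp hqq ha1
      exact absurd ⟨ha1, this⟩ hnot11
  -- the digits are exactly eps8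
  have hthr : ∀ j : Fin q, e j = eps8 p q j.val := by
    intro j
    unfold eps8
    rw [Nat.mod_eq_of_lt j.isLt]
    by_cases hcase : q - p ≤ j.val
    · rw [if_pos hcase]
      rcases Nat.eq_or_lt_of_le hcase with heq | hlt
      · have : j = qp := by apply Fin.ext; exact heq.symm
        rw [this]; exact he1.2
      · exact hmono qp j (by exact hlt) he1.2
    · rw [if_neg hcase]
      by_contra hne
      have hej : e j = 1 := by have := he j; omega
      rcases Nat.eq_or_lt_of_le (by omega : j.val ≤ q - p - 1) with heq | hlt
      · have : j = qp1 := by apply Fin.ext; exact heq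
        rw [this] at hej
        omega
      · have : j < qp1 := by exact hlt
        have := hmono j qp1 this hej
        omega
  -- telescoping
  have htel : ∀ n : ℕ, ∀ j : Fin q, (d:ℝ)^n * w j =
      w (j + ((n * p : ℕ) : Fin q)) +
        ∑ m ∈ range n, (e (j + ((m * p : ℕ) : Fin q)) : ℝ) * (d:ℝ)^(n - 1 - m) := by
    intro n
    induction n with
    | zero => intro j; simp
    | succ n ih =>
        intro j
        have step : (d:ℝ) * w (j + ((n * p : ℕ) : Fin q)) =
            w (j + (((n+1) * p : ℕ) : Fin q)) + e (j + ((n * p : ℕ) : Fin q)) := by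
          have h := hrel (j + ((n * p : ℕ) : Fin q))
          have harg : j + ((n * p : ℕ) : Fin q) + ((p : ℕ) : Fin q)
              = j + (((n+1) * p : ℕ) : Fin q) := by
            rw [add_assoc, ← Nat.cast_add]
            congr 1
            congr 1
            ring
          rw [harg] at h
          exact h
        calc (d:ℝ)^(n+1) * w j = (d:ℝ) * ((d:ℝ)^n * w j) := by ring
          _ = (d:ℝ) * (w (j + ((n * p : ℕ) : Fin q)) +
              ∑ m ∈ range n, (e (j + ((m * p : ℕ) : Fin q)) : ℝ) * (d:ℝ)^(n - 1 - m)) := by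
                rw [ih j]
          _ = (d:ℝ) * w (j + ((n * p : ℕ) : Fin q)) +
              ∑ m ∈ range n, (e (j + ((m * p : ℕ) : Fin q)) : ℝ) * ((d:ℝ)^(n - 1 - m) * (d:ℝ)) := by
                rw [mul_add, Finset.mul_sum]
                congr 1
                refine Finset.sum_congr rfl fun m hm => ?_
                ring
          _ = w (j + (((n+1) * p : ℕ) : Fin q)) +
              ∑ m ∈ range (n+1), (e (j + ((m * p : ℕ) : Fin q)) : ℝ) * (d:ℝ)^(n + 1 - 1 - m) := by
                rw [step, Finset.sum_range_succ]
                have hlast : (n + 1 - 1 - n : ℕ) = 0 := by omega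
                rw [hlast, pow_zero, mul_one]
                have hsum : ∀ m ∈ range n,
                    (e (j + ((m * p : ℕ) : Fin q)) : ℝ) * ((d:ℝ)^(n - 1 - m) * (d:ℝ))
                    = (e (j + ((m * p : ℕ) : Fin q)) : ℝ) * (d:ℝ)^(n + 1 - 1 - m) := by
                  intro m hm
                  have hm' : m < n := Finset.mem_range.mp hm
                  rw [← pow_succ]
                  congr 2
                  omega
                rw [Finset.sum_congr rfl hsum]
                ring
  -- conclude
  intro j
  have hfin := htel q j
  have hzero : ((q * p : ℕ) : Fin q) = 0 := by
    apply Fin.ext; simp [Nat.mul_mod_right]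
  rw [hzero, add_zero] at hfin
  have hsum : ∑ m ∈ range q, (e (j + ((m * p : ℕ) : Fin q)) : ℝ) * (d:ℝ)^(q - 1 - m)
      = (Nval8 d p q j.val : ℝ) := by
    unfold Nval8
    rw [Nat.cast_sum]
    refine Finset.sum_congr rfl fun m hm => ?_
    rw [hthr]
    have hval : (j + ((m * p : ℕ) : Fin q)).val = (j.val + m * p) % q := by
      rw [Fin.add_def]
      show (j.val + ((m * p : ℕ) : Fin q).val) % q = (j.val + m * p) % q
      rw [Fin.val_natCast, Nat.add_mod, Nat.mod_mod_of_dvd _ (dvd_refl q), ← Nat.add_mod]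
    rw [hval]
    have heq : eps8 p q ((j.val + m * p) % q) = eps8 p q (j.val + m * p) :=
      eps8_congr p q (Nat.mod_mod_of_dvd _ (dvd_refl q))
    rw [heq]
    push_cast
    ring
  rw [hsum] at hfin
  have hpow : (1:ℝ) < (d:ℝ)^q := one_lt_pow₀ hd1 (by omega)
  have hne : (d:ℝ)^q - 1 ≠ 0 := by linarith
  field_simp
  linarith [hfin]

lemma AC_eq_iff (x y : ℝ) :
    ((x : ℝ) : AddCircle (1:ℝ)) = ((y : ℝ) : AddCircle (1:ℝ)) ↔ ∃ n : ℤ, x - y = (n : ℝ) := by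
  rw [QuotientAddGroup.eq_iff_sub_mem, AddSubgroup.mem_zmultiples_iff]
  constructor
  · rintro ⟨n, hn⟩; exact ⟨n, by simpa using hn.symm⟩
  · rintro ⟨n, hn⟩; exact ⟨n, by simp [hn]⟩

/-- the candidate orbit point with index `j`. -/

noncomputable def Xp8 (d p q k j : ℕ) : ℝ :=
  (k : ℝ) / ((d : ℝ) - 1) + (Nval8 d p q j : ℝ) / ((d : ℝ)^q - 1)

section facts
variable (d p q k : ℕ) (hd : 2 ≤ d) (hp0 : 0 < p) (hpq : p < q) (hgcd : Nat.gcd p q = 1)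

lemma Xp8_congr {j j' : ℕ} (h : j % q = j' % q) : Xp8 d p q k j = Xp8 d p q k j' := by
  unfold Xp8; rw [Nval8_congr d p q h]

include hd hp0 hpq hgcd in
lemma Nval8_real_upper (j : ℕ) :
    ((d:ℝ) - 1) * (Nval8 d p q j : ℝ) < (d : ℝ)^q - 1 := by
  have hd2 : (2:ℝ) ≤ (d:ℝ) := by exact_mod_cast hd
  obtain ⟨n₀, hn₀, hub⟩ := Nval8_upper d p q j hd hp0 hpq hgcd
  have hcast : (Nval8 d p q j : ℝ) + (d:ℝ)^(q-1-n₀) ≤ ∑ n ∈ range q, (d:ℝ)^(q-1-n) := by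
    have := hub
    have h2 : ((Nval8 d p q j + d ^ (q - 1 - n₀) : ℕ) : ℝ)
        ≤ ((∑ n ∈ range q, d ^ (q - 1 - n) : ℕ) : ℝ) := by exact_mod_cast this
    push_cast at h2
    exact h2
  have hrefl : ∑ n ∈ range q, (d:ℝ)^(q-1-n) = ∑ n ∈ range q, (d:ℝ)^n :=
    Finset.sum_range_reflect (fun n => (d:ℝ)^n) q
  have hgeom : (∑ n ∈ range q, (d:ℝ)^n) * ((d:ℝ) - 1) = (d:ℝ)^q - 1 :=
    geom_sum_mul _ _
  have hpowpos : (0:ℝ) < (d:ℝ)^(q-1-n₀) := by positivity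
  have hd1 : (0:ℝ) < (d:ℝ) - 1 := by linarith
  nlinarith [hcast, hrefl, hgeom]

include hd hp0 hpq hgcd in
lemma Xp8_mem (j : ℕ) :
    Xp8 d p q k j ∈ Set.Ioo ((k : ℝ) / ((d:ℝ) - 1)) (((k : ℝ) + 1) / ((d:ℝ) - 1)) := by
  have hd2 : (2:ℝ) ≤ (d:ℝ) := by exact_mod_cast hd
  have hd1 : (0:ℝ) < (d:ℝ) - 1 := by linarith
  have hpow : (1:ℝ) < (d:ℝ)^q := one_lt_pow₀ (by linarith) (by omega)
  have hden : (0:ℝ) < (d:ℝ)^q - 1 := by linarith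
  have hpos : (0:ℝ) < (Nval8 d p q j : ℝ) := by
    exact_mod_cast Nval8_pos d p q j hd hp0 hpq hgcd
  have hup := Nval8_real_upper d p q hd hp0 hpq hgcd j
  constructor
  · unfold Xp8
    have : (0:ℝ) < (Nval8 d p q j : ℝ) / ((d:ℝ)^q - 1) := by positivity
    linarith
  · unfold Xp8
    have h1 : (Nval8 d p q j : ℝ) / ((d:ℝ)^q - 1) < 1 / ((d:ℝ) - 1) := by
      rw [div_lt_div_iff₀ hden hd1]
      linarith
    have h2 : ((k:ℝ) + 1) / ((d:ℝ) - 1) = (k:ℝ)/((d:ℝ)-1) + 1/((d:ℝ)-1) := by ring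
    linarith [h2]

include hd hp0 hpq hgcd in
lemma Xp8_rel (j : ℕ) :
    (d:ℝ) * Xp8 d p q k j = Xp8 d p q k (j + p) + ((k : ℝ) + (eps8 p q j : ℝ)) := by
  have hd2 : (2:ℝ) ≤ (d:ℝ) := by exact_mod_cast hd
  have hd1 : (0:ℝ) < (d:ℝ) - 1 := by linarith
  have hpow : (1:ℝ) < (d:ℝ)^q := one_lt_pow₀ (by linarith) (by omega)
  have hden : (0:ℝ) < (d:ℝ)^q - 1 := by linarith
  have hrec := Nval8_rec d p q j (by omega)
  have hrecR : (d:ℝ) * (Nval8 d p q j : ℝ) + (eps8 p q j : ℝ)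
      = (eps8 p q j : ℝ) * (d:ℝ)^q + (Nval8 d p q (j+p) : ℝ) := by exact_mod_cast hrec
  unfold Xp8
  field_simp
  ring_nf
  ring_nf at hrecR
  nlinarith [hrecR, hden, hd1]

include hd hp0 hpq hgcd in
lemma Xp8_mono {i j : ℕ} (hij : i < j) (hjq : j < q) : Xp8 d p q k i < Xp8 d p q k j := by
  have hd2 : (2:ℝ) ≤ (d:ℝ) := by exact_mod_cast hd
  have hpow : (1:ℝ) < (d:ℝ)^q := one_lt_pow₀ (by linarith) (by omega)
  have hden : (0:ℝ) < (d:ℝ)^q - 1 := by linarith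
  have h := Nval8_strictMono d p q hd hp0 hpq hgcd hij hjq
  have hR : (Nval8 d p q i : ℝ) < (Nval8 d p q j : ℝ) := by exact_mod_cast h
  unfold Xp8
  have hlt : (Nval8 d p q i : ℝ) / ((d:ℝ)^q - 1) < (Nval8 d p q j : ℝ) / ((d:ℝ)^q - 1) := by
    gcongr
  linarith
end facts

lemma unique8 (d p q k : ℕ) [NeZero q] (hd : 2 ≤ d) (hp0 : 0 < p) (hpq : p < q)
    (hgcd : Nat.gcd p q = 1) (s : Set (AddCircle (1:ℝ)))
    (hs : SetRotNum d p q s)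
    (hsub : s ⊆ Arc ((k : ℝ) / ((d : ℝ) - 1)) (((k : ℝ) + 1) / ((d : ℝ) - 1))) :
    s = Set.range fun i : Fin q => ((Xp8 d p q k i.val : ℝ) : AddCircle (1:ℝ)) := by
  have hq2 : 2 ≤ q := by omega
  have hd2 : (2:ℝ) ≤ (d:ℝ) := by exact_mod_cast hd
  have hd1 : (0:ℝ) < (d:ℝ) - 1 := by linarith
  set a : ℝ := (k : ℝ) / ((d : ℝ) - 1) with ha
  set b : ℝ := ((k : ℝ) + 1) / ((d : ℝ) - 1) with hb
  have hba : b - a = 1 / ((d:ℝ) - 1) := by rw [ha, hb]; field_simp; ring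
  have hba1 : b - a ≤ 1 := by
    rw [hba]
    rw [div_le_one hd1]
    linarith
  obtain ⟨L, ⟨x, hxm, hxw, hxL⟩, hrange, hrot⟩ := hs
  -- representatives in the arc
  have hyex : ∀ i : Fin q, ∃ u, u ∈ Set.Ioo a b ∧ ((u : ℝ) : AddCircle (1:ℝ)) = L i := by
    intro i
    have hLi : L i ∈ s := hrange ▸ Set.mem_range_self i
    obtain ⟨u, hu, hequ⟩ := hsub hLi
    exact ⟨u, hu, hequ⟩
  choose y hy1 hy2 using hyex
  have hmex : ∀ i : Fin q, ∃ n : ℤ, x i - y i = (n : ℝ) :=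
    fun i => (AC_eq_iff _ _).mp ((hxL i).trans (hy2 i).symm)
  choose m hm using hmex
  -- monotonicity of the integer parts
  have hmmono : ∀ i i' : Fin q, i ≤ i' → m i ≤ m i' := by
    intro i i' hii'
    rcases eq_or_lt_of_le hii' with rfl | hlt
    · exact le_rfl
    · have hx : x i < x i' := hxm hlt
      have hy' : y i' - y i < b - a := by
        have h1 := (hy1 i).1
        have h2 := (hy1 i').2
        linarith [(hy1 i).1, (hy1 i').2]
      have hR : ((m i : ℝ)) - ((m i' : ℝ)) < 1 := by
        have e1 := hm i
        have e2 := hm i'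
        linarith
      have : m i - m i' < 1 := by exact_mod_cast hR
      omega
  have hlastlt : q - 1 < q := by omega
  set lastF : Fin q := ⟨q - 1, hlastlt⟩ with hlastdef
  have hmtop : m lastF ≤ m 0 + 1 := by
    have hx : x lastF < x 0 + 1 := hxw lastF
    have hy' : y 0 - y lastF < b - a := by
      have h1 := (hy1 lastF).1
      have h2 := (hy1 0).2
      linarith [(hy1 lastF).1, (hy1 0).2]
    have hR : (m lastF : ℝ) - (m 0 : ℝ) < 2 := by
      have e1 := hm lastF
      have e2 := hm 0
      linarith
    have : m lastF - m 0 < 2 := by exact_mod_cast hR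
    omega
  -- the cut point
  have hPex : ∃ c : ℕ, ∃ hc : c < q, m ⟨c, hc⟩ = m lastF := ⟨q - 1, hlastlt, rfl⟩
  classical
  set c := Nat.find hPex with hcdef
  obtain ⟨hcq, hcval⟩ := Nat.find_spec hPex
  have hcmin : ∀ c' : ℕ, c' < c → ∀ hc' : c' < q, m ⟨c', hc'⟩ ≠ m lastF := by
    intro c' hc' hlt
    have := Nat.find_min hPex hc'
    intro hcon
    exact this ⟨hlt, hcon⟩
  set cF : Fin q := ⟨c, hcq⟩ with hcFdef
  -- values of m
  have hmval : ∀ i : Fin q, (c ≤ i.val → m i = m lastF) ∧ (i.val < c → m i = m lastF - 1) := by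
    intro i
    constructor
    · intro hci
      have h1 : m cF ≤ m i := hmmono cF i hci
      have h2 : m i ≤ m lastF := hmmono i lastF (by show i.val ≤ q - 1; omega)
      rw [hcFdef] at h1
      rw [hcval] at h1
      omega
    · intro hic
      have hne : m ⟨i.val, i.isLt⟩ ≠ m lastF := hcmin i.val hic i.isLt
      rw [Fin.eta] at hne
      have h2 : m i ≤ m lastF := hmmono i lastF (by show i.val ≤ q - 1; omega)
      have h3 : m 0 ≤ m i := hmmono 0 i (by show (0:Fin q).val ≤ i.val; simp)
      omega
  -- the sorted sequence
  set Y : Fin q → ℝ := fun j => y (j + cF) with hYdef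
  have hvaladd : ∀ j : Fin q, (j + cF).val = (j.val + c) % q := by
    intro j
    rw [Fin.add_def]
  have hYx : ∀ i : Fin q, y i = x i - (m i : ℝ) := by
    intro i
    have := hm i
    linarith
  have hYmono : StrictMono Y := by
    intro j j' hjj'
    have hjv : j.val < j'.val := hjj'
    show y (j + cF) < y (j' + cF)
    rw [hYx, hYx]
    by_cases h1 : j'.val + c < q
    · have h0 : j.val + c < q := by omega
      have hv1 : (j + cF).val = j.val + c := by rw [hvaladd, Nat.mod_eq_of_lt h0]
      have hv2 : (j' + cF).val = j'.val + c := by rw [hvaladd, Nat.mod_eq_of_lt h1]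
      have hm1 : m (j + cF) = m lastF := ((hmval _).1 (by omega))
      have hm2 : m (j' + cF) = m lastF := ((hmval _).1 (by omega))
      have hxlt : x (j + cF) < x (j' + cF) := hxm (by show (j + cF).val < (j' + cF).val; omega)
      rw [hm1, hm2]
      linarith
    · by_cases h2 : j.val + c < q
      · -- j does not wrap, j' wraps
        have hv1 : (j + cF).val = j.val + c := by rw [hvaladd, Nat.mod_eq_of_lt h2]
        have hv2 : (j' + cF).val = j'.val + c - q := by
          rw [hvaladd, Nat.mod_eq_sub_mod (by omega), Nat.mod_eq_of_lt (by omega)]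
        have hm1 : m (j + cF) = m lastF := ((hmval _).1 (by omega))
        have hm2 : m (j' + cF) = m lastF - 1 := ((hmval _).2 (by omega))
        have hxlt : x (j + cF) < x 0 + 1 := hxw _
        have hxle : x 0 ≤ x (j' + cF) := by
          rcases Nat.eq_zero_or_pos (j' + cF).val with hz | hpos
          · have : (j' + cF) = 0 := by apply Fin.ext; simpa using hz
            rw [this]
          · exact le_of_lt (hxm (by show (0:Fin q).val < (j' + cF).val; simpa using hpos))
        rw [hm1, hm2]
        push_cast
        linarith
      · -- both wrap
        have hv1 : (j + cF).val = j.val + c - q := by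
          rw [hvaladd, Nat.mod_eq_sub_mod (by omega), Nat.mod_eq_of_lt (by omega)]
        have hv2 : (j' + cF).val = j'.val + c - q := by
          rw [hvaladd, Nat.mod_eq_sub_mod (by omega), Nat.mod_eq_of_lt (by omega)]
        have hm1 : m (j + cF) = m lastF - 1 := ((hmval _).2 (by omega))
        have hm2 : m (j' + cF) = m lastF - 1 := ((hmval _).2 (by omega))
        have hxlt : x (j + cF) < x (j' + cF) := hxm (by show (j + cF).val < (j' + cF).val; omega)
        rw [hm1, hm2]
        linarith
  -- the integer jumps
  have hYrel : ∀ j : Fin q, ∃ μ : ℤ, (d:ℝ) * Y j = Y (j + (p : Fin q)) + (μ : ℝ) ∧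
      (k : ℤ) ≤ μ ∧ μ ≤ (k : ℤ) + 1 := by
    intro j
    have hr := hrot (j + cF)
    have hcomm : j + cF + (p : Fin q) = (j + (p : Fin q)) + cF := by
      rw [add_right_comm]
    rw [Fin.ofNat_eq_cast] at hr
    rw [hcomm, ← hy2, ← hy2] at hr
    rw [← AddCircle.coe_nsmul, nsmul_eq_mul] at hr
    obtain ⟨μ, hμ⟩ := (AC_eq_iff _ _).mp hr
    refine ⟨μ, by show (d:ℝ) * y (j + cF) = y ((j + (p:Fin q)) + cF) + μ; linarith, ?_, ?_⟩
    · -- lower bound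
      have hu := hy1 (j + cF)
      have hv := hy1 ((j + (p : Fin q)) + cF)
      simp only [Set.mem_Ioo] at hu hv
      have hu1 : (k:ℝ) < ((d:ℝ) - 1) * y (j + cF) := by
        rw [ha] at hu
        have := hu.1
        rw [div_lt_iff₀ hd1] at this
        linarith
      have hv1 : ((d:ℝ) - 1) * y ((j + (p:Fin q)) + cF) < (k:ℝ) + 1 := by
        rw [hb] at hv
        have := hv.2
        rw [lt_div_iff₀ hd1] at this
        linarith
      have hR : (k:ℝ) - 1 < (μ : ℝ) := by nlinarith [hu.1, hv.2]
      have : ((k:ℤ) - 1 : ℤ) < μ := by exact_mod_cast hR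
      omega
    · -- upper bound
      have hu := hy1 (j + cF)
      have hv := hy1 ((j + (p : Fin q)) + cF)
      simp only [Set.mem_Ioo] at hu hv
      have hu1 : ((d:ℝ) - 1) * y (j + cF) < (k:ℝ) + 1 := by
        rw [hb] at hu
        have := hu.2
        rw [lt_div_iff₀ hd1] at this
        linarith
      have hv1 : (k:ℝ) < ((d:ℝ) - 1) * y ((j + (p:Fin q)) + cF) := by
        rw [ha] at hv
        have := hv.1
        rw [div_lt_iff₀ hd1] at this
        linarith
      have hR : (μ : ℝ) < (k:ℝ) + 2 := by nlinarith
      have : μ < (k:ℤ) + 2 := by exact_mod_cast hR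
      omega
  choose μ hμ1 hμ2 hμ3 using hYrel
  -- apply the core lemma
  set w : Fin q → ℝ := fun j => Y j - a with hwdef
  set e : Fin q → ℕ := fun j => (μ j - k).toNat with hedef
  have hcore := core8 d p q hd hp0 hpq w (fun j j' h => by
      show Y j - a < Y j' - a; have := hYmono h; linarith)
    (fun j => by
      have := hy1 (j + cF)
      simp only [Set.mem_Ioo] at this
      constructor
      · show 0 < Y j - a; show 0 < y (j + cF) - a; linarith [this.1]
      · show Y j - a < 1/((d:ℝ)-1); rw [← hba]; show y (j + cF) - a < b - a; linarith [this.2])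
    e (fun j => by
      have h2 := hμ2 j
      have h3 := hμ3 j
      show (μ j - k).toNat ≤ 1
      omega)
    (fun j => by
      show (d:ℝ) * (Y j - a) = (Y (j + (p:Fin q)) - a) + ((μ j - (k:ℤ)).toNat : ℝ)
      have h1 := hμ1 j
      have h2 := hμ2 j
      have hka : ((d:ℝ) - 1) * a = k := by rw [ha]; field_simp
      have htn : (((μ j - (k:ℤ)).toNat : ℤ) : ℝ) = (μ j : ℝ) - (k : ℝ) := by
        rw [Int.toNat_of_nonneg (by omega)]
        push_cast
        ring
      push_cast at htn ⊢
      linarith [htn])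
  -- conclude the set equality
  rw [← hrange]
  apply Set.ext
  intro z
  simp only [Set.mem_range]
  constructor
  · rintro ⟨i, rfl⟩
    refine ⟨i - cF, ?_⟩
    have hY : Y (i - cF) = y i := by
      show y (i - cF + cF) = y i
      rw [sub_add_cancel]
    have hXpval : Xp8 d p q k (i - cF).val = Y (i - cF) := by
      have := hcore (i - cF)
      show Xp8 d p q k (i - cF).val = Y (i - cF)
      unfold Xp8
      rw [← this]
      show a + (Y (i - cF) - a) = Y (i - cF)
      ring
    rw [hXpval, hY, hy2]
  · rintro ⟨j, rfl⟩
    refine ⟨j + cF, ?_⟩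
    have hXpval : Xp8 d p q k j.val = Y j := by
      have := hcore j
      unfold Xp8
      rw [← this]
      show a + (Y j - a) = Y j
      ring
    rw [← hy2, hXpval]

lemma exists8 (d p q k : ℕ) [NeZero q] (hd : 2 ≤ d) (hp0 : 0 < p) (hpq : p < q)
    (hgcd : Nat.gcd p q = 1) :
    SetRotNum d p q (Set.range fun i : Fin q => ((Xp8 d p q k i.val : ℝ) : AddCircle (1:ℝ))) ∧
      (Set.range fun i : Fin q => ((Xp8 d p q k i.val : ℝ) : AddCircle (1:ℝ)))
        ⊆ Arc ((k : ℝ) / ((d : ℝ) - 1)) (((k : ℝ) + 1) / ((d : ℝ) - 1)) := by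
  have hd2 : (2:ℝ) ≤ (d:ℝ) := by exact_mod_cast hd
  have hd1 : (0:ℝ) < (d:ℝ) - 1 := by linarith
  constructor
  · refine ⟨fun i => ((Xp8 d p q k i.val : ℝ) : AddCircle (1:ℝ)),
      ⟨fun i => Xp8 d p q k i.val, ?_, ?_, fun i => rfl⟩, rfl, ?_⟩
    · intro i j hij
      exact Xp8_mono d p q k hd hp0 hpq hgcd (show i.val < j.val from hij) j.isLt
    · intro i
      have h1 := (Xp8_mem d p q k hd hp0 hpq hgcd i.val).2
      have h2 := (Xp8_mem d p q k hd hp0 hpq hgcd (0:Fin q).val).1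
      have h3 : ((k:ℝ) + 1) / ((d:ℝ) - 1) = (k:ℝ)/((d:ℝ)-1) + 1/((d:ℝ)-1) := by ring
      have h4 : 1/((d:ℝ)-1) ≤ 1 := by
        rw [div_le_one hd1]; linarith
      linarith
    · intro i
      rw [← AddCircle.coe_nsmul, nsmul_eq_mul]
      have hXrel := Xp8_rel d p q k hd hp0 hpq hgcd i.val
      rw [hXrel]
      have hval : (i + (p : Fin q)).val = (i.val + p) % q := by
        rw [Fin.add_def]
        show (i.val + ((p : ℕ) : Fin q).val) % q = (i.val + p) % q
        rw [Fin.val_natCast, Nat.add_mod, Nat.mod_mod_of_dvd _ (dvd_refl q), ← Nat.add_mod]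
      have harg : Xp8 d p q k (i.val + p) = Xp8 d p q k ((i + (p : Fin q)).val) := by
        apply Xp8_congr
        rw [hval, Nat.mod_mod_of_dvd _ (dvd_refl q)]
      rw [harg]
      rw [Fin.ofNat_eq_cast]
      apply (AC_eq_iff _ _).mpr
      exact ⟨(k : ℤ) + (eps8 p q i.val : ℤ), by push_cast; ring⟩
  · rintro z ⟨i, rfl⟩
    exact ⟨Xp8 d p q k i.val, Xp8_mem d p q k hd hp0 hpq hgcd i.val, rfl⟩

end Aux8

/-- For each `d ≥ 2`, each `k ∈ {0,…,d−2}`, and each `p/q` in lowest terms with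
`0 < p < q`, there is exactly one orbit of `σ_d : t ↦ d·t (mod 1)` entirely contained
in the open arc `A_k = (k/(d−1), (k+1)/(d−1))` and having angular rotation number `p/q`. -/
theorem stmt8 (d p q k : ℕ) [NeZero q] (hd : 2 ≤ d) (hk : k ≤ d - 2)
    (hp0 : 0 < p) (hpq : p < q) (hgcd : Nat.gcd p q = 1) :
    ∃! s : Set (AddCircle (1 : ℝ)), SetRotNum d p q s ∧
      s ⊆ Arc ((k : ℝ) / ((d : ℝ) - 1) : ℝ) (((k : ℝ) + 1) / ((d : ℝ) - 1) : ℝ) := by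
  refine ⟨Set.range fun i : Fin q => ((Xp8 d p q k i.val : ℝ) : AddCircle (1:ℝ)),
    ⟨(exists8 d p q k hd hp0 hpq hgcd).1, (exists8 d p q k hd hp0 hpq hgcd).2⟩,
    fun s hs => unique8 d p q k hd hp0 hpq hgcd s hs.1 hs.2⟩
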